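/- For S > 0, the function f(R) = 2R + (1/2)[S/(e^{2R}−1) − ln(S/(e^{2R}−1)) − 1] defined for R > 0 attains its unique stationary point at R* = (1/2)·ln((S + 5 + √(S² + 10S + 1))/6); equivalently, setting x = e^{2R}, f′(R) = 0 iff 3x² − (S+5)x + 2 = 0 with x > 1. -/
import Mathlib


open Real

noncomputable def fDiv (S R : ℝ) : ℝ :=
  2 * R + (1 / 2) * (S / (exp (2 * R) - 1) - Real.log (S / (exp (2 * R) - 1)) - 1)

lemma fDiv_hasDerivAt (S : ℝ) (hS : 0 < S) (R : ℝ) (hR : 0 < R) :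
    HasDerivAt (fDiv S)
      ((3 * (exp (2 * R)) ^ 2 - (S + 5) * exp (2 * R) + 2) / (exp (2 * R) - 1) ^ 2) R := by
  have hx : 1 < exp (2 * R) := by
    have : exp 0 < exp (2 * R) := exp_lt_exp.mpr (by linarith)
    simpa using this
  set x := exp (2 * R) with hxdef
  have hu : (0:ℝ) < x - 1 := by linarith
  have hune : x - 1 ≠ 0 := ne_of_gt hu
  have h0 : HasDerivAt (fun R : ℝ => 2 * R) 2 R := by
    simpa using (hasDerivAt_id R).const_mul 2
  have h1 : HasDerivAt (fun R : ℝ => exp (2 * R)) (exp (2 * R) * 2) R :=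
    (Real.hasDerivAt_exp (2 * R)).comp R h0
  have h2 : HasDerivAt (fun R : ℝ => exp (2 * R) - 1) (exp (2 * R) * 2) R :=
    h1.sub_const 1
  have h3 : HasDerivAt (fun R : ℝ => S / (exp (2 * R) - 1))
      ((0 * (x - 1) - S * (x * 2)) / (x - 1) ^ 2) R :=
    (hasDerivAt_const R S).div h2 hune
  have hpos : S / (x - 1) > 0 := div_pos hS hu
  have h4 : HasDerivAt (fun R : ℝ => Real.log (S / (exp (2 * R) - 1)))
      (((0 * (x - 1) - S * (x * 2)) / (x - 1) ^ 2) / (S / (x - 1))) R :=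
    h3.log (ne_of_gt hpos)
  have h5 : HasDerivAt (fDiv S)
      (2 * 1 + (1 / 2) * ((0 * (x - 1) - S * (x * 2)) / (x - 1) ^ 2
        - ((0 * (x - 1) - S * (x * 2)) / (x - 1) ^ 2) / (S / (x - 1)))) R :=
    ((hasDerivAt_id R).const_mul 2).add
      (((h3.sub h4).sub_const 1).const_mul (1 / 2))
  convert h5 using 1
  field_simp
  ring

/-- For `S > 0`, the function `f(R) = 2R + (1/2)[S/(e^{2R}−1) − ln(S/(e^{2R}−1)) − 1]`,
`R > 0`, has its unique stationary point at
`R* = (1/2)·ln((S + 5 + √(S² + 10S + 1))/6)`; equivalently, with `x = e^{2R}`,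
`f′(R) = 0` iff `3x² − (S+5)x + 2 = 0` (with `x > 1`). -/
theorem divergence_bound_stationary (S : ℝ) (hS : 0 < S) :
    ∀ R : ℝ, 0 < R →
      ((deriv (fDiv S) R = 0 ↔
          3 * (exp (2 * R)) ^ 2 - (S + 5) * exp (2 * R) + 2 = 0) ∧
       (deriv (fDiv S) R = 0 ↔
          R = (1 / 2) * Real.log ((S + 5 + Real.sqrt (S ^ 2 + 10 * S + 1)) / 6))) := by
  intro R hR
  have hx : 1 < exp (2 * R) := by
    have : exp 0 < exp (2 * R) := exp_lt_exp.mpr (by linarith)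
    simpa using this
  set x := exp (2 * R) with hxdef
  have hu : (0:ℝ) < x - 1 := by linarith
  have hderiv : deriv (fDiv S) R
      = (3 * x ^ 2 - (S + 5) * x + 2) / (x - 1) ^ 2 :=
    (fDiv_hasDerivAt S hS R hR).deriv
  have hiff1 : deriv (fDiv S) R = 0 ↔ 3 * x ^ 2 - (S + 5) * x + 2 = 0 := by
    rw [hderiv, div_eq_zero_iff]
    constructor
    · rintro (h | h)
      · exact h
      · exact absurd h (pow_ne_zero 2 (ne_of_gt hu))
    · exact fun h => Or.inl h
  refine ⟨hiff1, hiff1.trans ?_⟩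
  set d := Real.sqrt (S ^ 2 + 10 * S + 1) with hddef
  have hd2 : d ^ 2 = S ^ 2 + 10 * S + 1 := Real.sq_sqrt (by nlinarith)
  have hd0 : 0 ≤ d := Real.sqrt_nonneg _
  have hd1 : 1 < d := by nlinarith
  have hr_gt : 1 < (S + 5 + d) / 6 := by nlinarith
  have hr_pos : 0 < (S + 5 + d) / 6 := by linarith
  have hquad : 3 * x ^ 2 - (S + 5) * x + 2 = 0 ↔ x = (S + 5 + d) / 6 := by
    constructor
    · intro h
      have hfac : 3 * (x - (S + 5 + d) / 6) * (x - (S + 5 - d) / 6) = 0 := by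
        linear_combination h - hd2 / 12
      have hlow : (S + 5 - d) / 6 < 1 := by nlinarith
      rcases mul_eq_zero.mp hfac with h' | h'
      · rcases mul_eq_zero.mp h' with h'' | h''
        · norm_num at h''
        · linarith [sub_eq_zero.mp h'']
      · have := sub_eq_zero.mp h'
        linarith
    · intro h
      rw [h]
      linear_combination hd2 / 12
  rw [hquad]
  constructor
  · intro h
    have : Real.log x = Real.log ((S + 5 + d) / 6) := by rw [h]
    rw [hxdef, Real.log_exp] at this
    linarith
  · intro h
    have h2R : 2 * R = Real.log ((S + 5 + d) / 6) := by linarith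
    rw [hxdef, h2R, Real.exp_log hr_pos]
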